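/- Let G be a finite group that is the internal central product of its normal subgroups H and K, with A = H ∩ K and Z = [H,H] ∩ [K,K]. Then the Schur multiplier M(G) = H²(G, ℂ*) contains a subgroup isomorphic to Z × ((H/A) ⊗ (K/A)). -/

import Mathlib

/-!
Setting (central products): `G` is a group with normal subgroups `H` and `K` such that
`G = HK` (i.e. `H ⊔ K = ⊤`) and `[H, K] = 1` (i.e. every element of `H` commutes with
every element of `K`).  We set `A = H ⊓ K` and `Z = ⁅H,H⁆ ⊓ ⁅K,K⁆`; both are central
in `G`.  Coefficients are taken in a divisible abelian group `D`, regarded as a trivial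
module.  Second cohomology `H2 X D` is realized concretely as (inhomogeneous)
2-cocycles modulo 2-coboundaries, and `Hom(X, D)` is realized as `Additive X →+ D`.
-/

open scoped TensorProduct

set_option maxHeartbeats 1000000
set_option synthInstance.maxHeartbeats 1000000
set_option synthInstance.maxSize 2000

namespace SchurCP

variable (G : Type) [Group G] (D : Type) [AddCommGroup D]

/-- The group of 2-cocycles on `G` with values in the trivial module `D`. -/
def cocycles2 : AddSubgroup (G → G → D) where
  carrier := {f | ∀ g h k : G, f g h + f (g * h) k = f h k + f g (h * k)}
  zero_mem' := by intro g h k; simp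
  add_mem' := by
    intro a b ha hb g h k
    simp only [Pi.add_apply]
    rw [add_add_add_comm, ha g h k, hb g h k, add_add_add_comm]
  neg_mem' := by
    intro a ha g h k
    simp only [Pi.neg_apply]
    rw [← neg_add, ← neg_add, ha g h k]

/-- The group of 2-coboundaries on `G` with values in the trivial module `D`. -/
def coboundaries2 : AddSubgroup (G → G → D) where
  carrier := {f | ∃ φ : G → D, ∀ g h : G, f g h = φ g + φ h - φ (g * h)}
  zero_mem' := ⟨0, by simp⟩
  add_mem' := by
    rintro a b ⟨φ, hφ⟩ ⟨ψ, hψ⟩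
    exact ⟨φ + ψ, fun g h => by simp only [Pi.add_apply, hφ g h, hψ g h]; abel⟩
  neg_mem' := by
    rintro a ⟨φ, hφ⟩
    exact ⟨-φ, fun g h => by simp only [Pi.neg_apply, hφ g h]; abel⟩

/-- The second cohomology group `H²(G, D)` of `G` with coefficients in the
trivial module `D`. -/
def H2 : Type := cocycles2 G D ⧸ (coboundaries2 G D).addSubgroupOf (cocycles2 G D)

instance : AddCommGroup (H2 G D) :=
  QuotientAddGroup.Quotient.addCommGroup ((coboundaries2 G D).addSubgroupOf (cocycles2 G D))

variable {G D}

/-- The cohomology class of a 2-cocycle. -/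
abbrev H2mk (f : cocycles2 G D) : H2 G D := QuotientAddGroup.mk f

/-- Pullback of a 2-cocycle along a group homomorphism. -/
def pullCocycle {G' : Type} [Group G'] (π : G' →* G) :
    cocycles2 G D →+ cocycles2 G' D where
  toFun f := ⟨fun x y => (f : G → G → D) (π x) (π y), by
    intro x y z
    simpa only [map_mul] using f.2 (π x) (π y) (π z)⟩
  map_zero' := rfl
  map_add' _ _ := rfl

/-- The homomorphism `H²(G, D) → H²(G', D)` induced by a group homomorphism
`π : G' → G`; this specializes to restriction maps (for inclusions of subgroups)
and to inflation maps (for quotient maps). -/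
def H2Map {G' : Type} [Group G'] (π : G' →* G) : H2 G D →+ H2 G' D :=
  QuotientAddGroup.map _ _ (pullCocycle π) (by
    intro f hf
    rw [AddSubgroup.mem_addSubgroupOf] at hf
    rw [AddSubgroup.mem_comap, AddSubgroup.mem_addSubgroupOf]
    obtain ⟨φ, hφ⟩ := hf
    exact ⟨fun x => φ (π x), fun x y => by
      show (f : G → G → D) (π x) (π y) = _
      rw [hφ (π x) (π y), ← map_mul]⟩)

theorem commutator_le_self {X : Type} [Group X] (H : Subgroup X) : ⁅H, H⁆ ≤ H := by
  rw [Subgroup.commutator_le]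
  intro g₁ h₁ g₂ h₂
  rw [commutatorElement_def]
  exact H.mul_mem (H.mul_mem (H.mul_mem h₁ h₂) (H.inv_mem h₁)) (H.inv_mem h₂)

theorem inf_commutator_le_inf {X : Type} [Group X] (H K : Subgroup X) :
    ⁅H, H⁆ ⊓ ⁅K, K⁆ ≤ H ⊓ K :=
  inf_le_inf (commutator_le_self H) (commutator_le_self K)

theorem subgroupOf_le {X : Type} [Group X] {B C : Subgroup X} (h : B ≤ C)
    (J : Subgroup X) : B.subgroupOf J ≤ C.subgroupOf J := fun _x hx => h hx

/-- The natural projection `X/N → X/M` for `N ≤ M`. -/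
def quotProj {X : Type} [Group X] {N M : Subgroup X} [N.Normal] [M.Normal] (h : N ≤ M) :
    (X ⧸ N) →* (X ⧸ M) :=
  QuotientGroup.map N M (MonoidHom.id X) (by rwa [Subgroup.comap_id])

/-- The inflation homomorphism `H²(X/M, D) → H²(X/N, D)` for `N ≤ M`. -/
def inflMap {X : Type} [Group X] {N M : Subgroup X} [N.Normal] [M.Normal]
    (h : N ≤ M) (D : Type) [AddCommGroup D] : H2 (X ⧸ M) D →+ H2 (X ⧸ N) D :=
  H2Map (quotProj h)

/-- The natural homomorphism `H/(A ∩ H) → X/A` for subgroups `A, H` of `X`;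
for `A ≤ H` this realizes `H/A` as a subgroup of `X/A`. -/
def quotInclusion {X : Type} [Group X] (H A : Subgroup X) [A.Normal]
    [(A.subgroupOf H).Normal] : (↥H ⧸ A.subgroupOf H) →* X ⧸ A :=
  QuotientGroup.map (A.subgroupOf H) A H.subtype (fun _x hx => hx)

/-- The abelian tensor product `X ⊗ Y = X/[X,X] ⊗_ℤ Y/[Y,Y]` of two groups. -/
abbrev AbTensor (X Y : Type) [Group X] [Group Y] : Type :=
  TensorProduct ℤ (Additive (Abelianization X)) (Additive (Abelianization Y))

/-- The element `x[X,X] ⊗ y[Y,Y]` of the abelian tensor product. -/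
noncomputable abbrev tmulAb {X Y : Type} [Group X] [Group Y] (x : X) (y : Y) :
    AbTensor X Y :=
  Additive.ofMul (Abelianization.of x) ⊗ₜ[ℤ] Additive.ofMul (Abelianization.of y)

/-- The map on abelian tensor products induced by a pair of group homomorphisms. -/
noncomputable def abTensorMap {X Y X' Y' : Type} [Group X] [Group Y] [Group X'] [Group Y']
    (f : X →* X') (g : Y →* Y') : AbTensor X Y →ₗ[ℤ] AbTensor X' Y' :=
  TensorProduct.map (MonoidHom.toAdditive (Abelianization.map f)).toIntLinearMap
    (MonoidHom.toAdditive (Abelianization.map g)).toIntLinearMap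


/-! ### Auxiliary development for the main theorem -/

section Divisible

/-- Every unit of `ℂ` has `n`-th roots for `n ≠ 0`. -/
theorem units_complex_pow_surj (x : ℂˣ) {n : ℕ} (hn : n ≠ 0) : ∃ y : ℂˣ, y ^ n = x := by
  obtain ⟨z, hz⟩ := IsAlgClosed.exists_pow_nat_eq (x : ℂ) (Nat.pos_of_ne_zero hn)
  have hz0 : z ≠ 0 := by
    intro h
    rw [h, zero_pow hn] at hz
    exact x.ne_zero hz.symm
  refine ⟨Units.mk0 z hz0, Units.ext ?_⟩
  simpa using hz

noncomputable def cdiv (a : Additive ℂˣ) (n : ℕ) : Additive ℂˣ :=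
  if h : n = 0 then 0
  else Additive.ofMul (Classical.choose (units_complex_pow_surj (Additive.toMul a) h))

noncomputable instance : DivisibleBy (Additive ℂˣ) ℕ where
  div := cdiv
  div_zero a := by simp [cdiv]
  div_cancel a hn := by
    unfold cdiv
    rw [dif_neg hn]
    have hs := Classical.choose_spec (units_complex_pow_surj (Additive.toMul a) hn)
    rw [← ofMul_pow, hs]
    rfl

noncomputable instance : DivisibleBy (Additive ℂˣ) ℤ :=
  AddGroup.divisibleByIntOfDivisibleByNat _

/-- Homomorphisms into `ℂˣ` extend along injections of abelian groups. -/
theorem extend_to_units {X Y : Type} [AddCommGroup X] [AddCommGroup Y] (i : X →+ Y)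
    (hi : Function.Injective i) (f : X →+ Additive ℂˣ) :
    ∃ g : Y →+ Additive ℂˣ, ∀ x, g (i x) = f x := by
  obtain ⟨h, hh⟩ := (Module.Baer.of_divisible (Additive ℂˣ)).injective.out
    i.toIntLinearMap hi f.toIntLinearMap
  exact ⟨h.toAddMonoidHom, hh⟩

end Divisible

section Duality

/-- Duality for finite commutative groups, with values in `ℂˣ` (additive form). -/
theorem dual_equiv (B : Type) [CommGroup B] [Finite B] :
    Nonempty (Additive B ≃+ (Additive B →+ Additive ℂˣ)) := by
  haveI : NeZero ((Monoid.exponent B : ℂ)) :=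
    ⟨Nat.cast_ne_zero.mpr Monoid.exponent_ne_zero_of_finite⟩
  obtain ⟨e⟩ := CommGroup.monoidHom_mulEquiv_of_hasEnoughRootsOfUnity B ℂ
  refine ⟨(MulEquiv.toAdditive e.symm).trans ?_⟩
  exact
    { toFun := fun f => MonoidHom.toAdditive (Additive.toMul f)
      invFun := fun g => Additive.ofMul (MonoidHom.toAdditive.symm g)
      left_inv := fun f => by simp
      right_inv := fun g => by simp
      map_add' := fun f g => rfl }

/-- Duality for finite abelian (additive) groups, with values in `ℂˣ`. -/
theorem dual_equiv_add (T : Type) [AddCommGroup T] [Finite T] :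
    Nonempty (T ≃+ (T →+ Additive ℂˣ)) := by
  obtain ⟨e⟩ := dual_equiv (Multiplicative T)
  let a : Additive (Multiplicative T) ≃+ T := AddEquiv.additiveMultiplicative T
  refine ⟨a.symm.trans (e.trans ?_)⟩
  exact
    { toFun := fun f => f.comp a.symm.toAddMonoidHom
      invFun := fun g => g.comp a.toAddMonoidHom
      left_inv := fun f => by ext x; simp
      right_inv := fun g => by ext x; simp
      map_add' := fun f g => rfl }

end Duality

section Finiteness

theorem finite_abTensor (X Y : Type) [Group X] [Group Y] [Finite X] [Finite Y] :
    Finite (AbTensor X Y) := by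
  haveI : Finite (Abelianization X) := Quotient.finite _
  haveI : Finite (Abelianization Y) := Quotient.finite _
  haveI : Module.Finite ℤ (Additive (Abelianization X)) := Module.Finite.of_finite
  haveI : Module.Finite ℤ (Additive (Abelianization Y)) := Module.Finite.of_finite
  haveI : AddGroup.FG (AbTensor X Y) :=
    Module.Finite.iff_addGroup_fg.mp (Module.Finite.tensorProduct ℤ _ _)
  apply AddCommGroup.finite_of_fg_torsion
  intro x
  have key : (Nat.card (Additive (Abelianization X)) : ℤ) • x = 0 := by
    induction x using TensorProduct.induction_on with
    | zero => simp
    | tmul a b =>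
        rw [TensorProduct.smul_tmul']
        have : (Nat.card (Additive (Abelianization X)) : ℤ) • a = 0 := by
          rw [natCast_zsmul, card_nsmul_eq_zero']
        rw [this, TensorProduct.zero_tmul]
    | add u v hu hv => rw [smul_add, hu, hv, add_zero]
  have hpos : 0 < Nat.card (Additive (Abelianization X)) := Nat.card_pos
  rw [natCast_zsmul] at key
  exact isOfFinAddOrder_iff_nsmul_eq_zero.mpr ⟨_, hpos, key⟩
end Finiteness

/-- All data of a central product decomposition, together with a chosen
set-theoretic factorization `g = hp g * kp g`. -/
structure CPData (G : Type) [Group G] (H K : Subgroup G) : Type where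
  hp : G → G
  kp : G → G
  memH : ∀ g, hp g ∈ H
  memK : ∀ g, kp g ∈ K
  mul_eq : ∀ g, hp g * kp g = g
  comm : ∀ h ∈ H, ∀ k ∈ K, Commute h k
  central : ∀ a ∈ H ⊓ K, ∀ g : G, Commute a g

namespace CPData

variable {G : Type} [Group G] {H K : Subgroup G} (c : CPData G H K)

/-- The 2-cocycle measuring the failure of `hp` to be multiplicative. -/
def t (x y : G) : G := c.hp x * c.hp y * (c.hp (x * y))⁻¹

theorem hk_swap (x y : G) : c.hp x * c.hp y * (c.kp x * c.kp y) = c.hp (x * y) * c.kp (x * y) := by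
  have h1 : c.hp y * c.kp x = c.kp x * c.hp y := (c.comm _ (c.memH y) _ (c.memK x)).eq
  calc c.hp x * c.hp y * (c.kp x * c.kp y)
      = c.hp x * (c.hp y * c.kp x) * c.kp y := by group
    _ = c.hp x * (c.kp x * c.hp y) * c.kp y := by rw [h1]
    _ = (c.hp x * c.kp x) * (c.hp y * c.kp y) := by group
    _ = x * y := by rw [c.mul_eq, c.mul_eq]
    _ = c.hp (x * y) * c.kp (x * y) := (c.mul_eq (x * y)).symm

theorem c1_mem (x y : G) : (c.hp (x * y))⁻¹ * (c.hp x * c.hp y) ∈ H ⊓ K := by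
  constructor
  · exact H.mul_mem (H.inv_mem (c.memH _)) (H.mul_mem (c.memH x) (c.memH y))
  · have : (c.hp (x * y))⁻¹ * (c.hp x * c.hp y) = c.kp (x * y) * (c.kp x * c.kp y)⁻¹ := by
      rw [inv_mul_eq_iff_eq_mul, ← mul_assoc (c.hp (x * y)), ← c.hk_swap x y,
        mul_inv_cancel_right]
    rw [this]
    exact K.mul_mem (c.memK _) (K.inv_mem (K.mul_mem (c.memK x) (c.memK y)))

theorem t_eq (x y : G) : c.t x y = (c.hp (x * y))⁻¹ * (c.hp x * c.hp y) := by
  have hc := c.central _ (c.c1_mem x y) (c.hp (x * y))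
  calc c.t x y = c.hp (x * y) * ((c.hp (x * y))⁻¹ * (c.hp x * c.hp y)) * (c.hp (x * y))⁻¹ := by
        show c.hp x * c.hp y * (c.hp (x * y))⁻¹ = _
        rw [mul_inv_cancel_left]
    _ = (c.hp (x * y))⁻¹ * (c.hp x * c.hp y) * c.hp (x * y) * (c.hp (x * y))⁻¹ := by
        rw [← hc.eq]
    _ = (c.hp (x * y))⁻¹ * (c.hp x * c.hp y) := by rw [mul_inv_cancel_right]

theorem t_mem (x y : G) : c.t x y ∈ H ⊓ K := by
  rw [c.t_eq]; exact c.c1_mem x y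

theorem t_kp (x y : G) : c.kp x * c.kp y * (c.kp (x * y))⁻¹ = (c.t x y)⁻¹ := by
  have h2 : c.hp x * c.hp y * (c.kp x * c.kp y * (c.kp (x * y))⁻¹) =
      c.hp x * c.hp y * ((c.hp x * c.hp y)⁻¹ * c.hp (x * y)) := by
    rw [mul_inv_cancel_left, ← mul_assoc, c.hk_swap x y, mul_inv_cancel_right]
  rw [mul_left_cancel h2, c.t_eq]
  group

theorem kp_eq_t_mul (x y : G) : c.kp x * c.kp y = (c.t x y)⁻¹ * c.kp (x * y) := by
  rw [← c.t_kp x y]; group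

theorem k1_mem (x y : G) : (c.kp (x * y))⁻¹ * (c.kp x * c.kp y) ∈ H ⊓ K := by
  have h : (c.kp (x * y))⁻¹ * (c.kp x * c.kp y) = (c.t x y)⁻¹ := by
    rw [c.kp_eq_t_mul x y]
    have hc := c.central _ ((H ⊓ K).inv_mem (c.t_mem x y)) (c.kp (x * y))
    rw [hc.eq, inv_mul_cancel_left]
  rw [h]
  exact (H ⊓ K).inv_mem (c.t_mem x y)

theorem t_cocycle (x y z : G) : c.t x y * c.t (x * y) z = c.t y z * c.t x (y * z) := by
  have hyz := c.central _ (c.t_mem y z)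
  have L : c.t x y * c.t (x * y) z = c.hp x * (c.hp y * c.hp z) * (c.hp (x * (y * z)))⁻¹ := by
    show c.hp x * c.hp y * (c.hp (x * y))⁻¹ * (c.hp (x * y) * c.hp z * (c.hp (x * y * z))⁻¹) = _
    rw [mul_assoc x y z]
    group
  have R : c.t y z * c.t x (y * z) = c.hp x * (c.hp y * c.hp z) * (c.hp (x * (y * z)))⁻¹ :=
    calc c.t y z * c.t x (y * z) = c.t x (y * z) * c.t y z := (hyz _).eq
    _ = c.hp x * c.hp (y * z) * (c.hp (x * (y * z)))⁻¹ * c.t y z := rfl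
    _ = c.hp x * c.hp (y * z) * c.t y z * (c.hp (x * (y * z)))⁻¹ := by
        rw [mul_assoc (c.hp x * c.hp (y * z)), ← (hyz _).eq, ← mul_assoc]
    _ = c.hp x * (c.hp (y * z) * c.t y z) * (c.hp (x * (y * z)))⁻¹ := by
        rw [mul_assoc (c.hp x)]
    _ = c.hp x * (c.hp y * c.hp z) * (c.hp (x * (y * z)))⁻¹ := by
        rw [c.t_eq y z, mul_inv_cancel_left]
  rw [L, R]

theorem kp_eq (x : G) : c.kp x = (c.hp x)⁻¹ * x :=
  eq_inv_mul_iff_mul_eq.mpr (c.mul_eq x)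

theorem hp_eq (x : G) : c.hp x = x * (c.kp x)⁻¹ :=
  eq_mul_inv_iff_mul_eq.mpr (c.mul_eq x)

theorem kp_mem_of_memH {x : G} (hx : x ∈ H) : c.kp x ∈ H ⊓ K :=
  ⟨by rw [c.kp_eq x]; exact H.mul_mem (H.inv_mem (c.memH x)) hx, c.memK x⟩

theorem hp_mem_of_memK {y : G} (hy : y ∈ K) : c.hp y ∈ H ⊓ K :=
  ⟨c.memH y, by rw [c.hp_eq y]; exact K.mul_mem hy (K.inv_mem (c.memK y))⟩

theorem inv_mul_hp_mem {x : G} (hx : x ∈ H) : x⁻¹ * c.hp x ∈ H ⊓ K := by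
  have h : x⁻¹ * c.hp x = (c.kp x)⁻¹ := by rw [c.hp_eq x, inv_mul_cancel_left]
  rw [h]
  exact (H ⊓ K).inv_mem (c.kp_mem_of_memH hx)

theorem inv_mul_kp_mem {y : G} (hy : y ∈ K) : y⁻¹ * c.kp y ∈ H ⊓ K := by
  have hc := (c.central _ (c.hp_mem_of_memK hy) y).inv_left.eq
  have h : y⁻¹ * c.kp y = (c.hp y)⁻¹ := by rw [c.kp_eq y, hc, inv_mul_cancel_left]
  rw [h]
  exact (H ⊓ K).inv_mem (c.hp_mem_of_memK hy)

theorem t_comm_of_comm {x y : G} (hxy : x * y = y * x) (hy : c.hp y ∈ H ⊓ K) :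
    c.t x y = c.t y x := by
  show c.hp x * c.hp y * (c.hp (x * y))⁻¹ = c.hp y * c.hp x * (c.hp (y * x))⁻¹
  rw [hxy, (c.central _ hy (c.hp x)).eq]

/-- `t` as an element of the subgroup `H ⊓ K`. -/
def tA (x y : G) : ↥(H ⊓ K) := ⟨c.t x y, c.t_mem x y⟩

/-- `kp` of an element of `H`, as an element of `H ⊓ K`. -/
def kpA (x : G) (hx : x ∈ H) : ↥(H ⊓ K) := ⟨c.kp x, c.kp_mem_of_memH hx⟩

/-- `hp` of an element of `K`, as an element of `H ⊓ K`. -/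
def hpA (y : G) (hy : y ∈ K) : ↥(H ⊓ K) := ⟨c.hp y, c.hp_mem_of_memK hy⟩

theorem tA_cocycle (x y z : G) : c.tA x y * c.tA (x * y) z = c.tA y z * c.tA x (y * z) :=
  Subtype.ext (c.t_cocycle x y z)

theorem tA_kp {x y : G} (hx : x ∈ H) (hy : y ∈ H) :
    c.tA x y = c.kpA (x * y) (H.mul_mem hx hy) * (c.kpA y hy)⁻¹ * (c.kpA x hx)⁻¹ := by
  apply Subtype.ext
  show c.t x y = c.kp (x * y) * (c.kp y)⁻¹ * (c.kp x)⁻¹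
  have h : c.t x y = (c.kp x * c.kp y * (c.kp (x * y))⁻¹)⁻¹ := by rw [c.t_kp x y, inv_inv]
  rw [h]
  group

theorem tA_hp {x y : G} (hx : x ∈ K) (hy : y ∈ K) :
    c.tA x y = c.hpA x hx * c.hpA y hy * (c.hpA (x * y) (K.mul_mem hx hy))⁻¹ :=
  Subtype.ext rfl

theorem tA_comm {x y : G} (hx : x ∈ H) (hy : y ∈ K) : c.tA x y = c.tA y x :=
  Subtype.ext (c.t_comm_of_comm ((c.comm x hx y hy).eq) (c.hp_mem_of_memK hy))

theorem hpA_mul_kpA {z : G} (hz : z ∈ H ⊓ K) :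
    c.hpA z hz.2 * c.kpA z hz.1 = ⟨z, hz⟩ :=
  Subtype.ext (c.mul_eq z)

end CPData

set_option linter.unusedSectionVars false

namespace CPData

section QuotClasses

variable {G : Type} [Group G] {H K : Subgroup G} (c : CPData G H K)
variable [((H ⊓ K).subgroupOf H).Normal] [((H ⊓ K).subgroupOf K).Normal]

/-- The class of (the `H`-part of) `g` in the abelianized quotient `(H/A)ᵃᵇ`. -/
noncomputable def gH (g : G) : Additive (Abelianization (↥H ⧸ (H ⊓ K).subgroupOf H)) :=
  Additive.ofMul (Abelianization.of (QuotientGroup.mk (⟨c.hp g, c.memH g⟩ : ↥H)))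

/-- The class of (the `K`-part of) `g` in the abelianized quotient `(K/A)ᵃᵇ`. -/
noncomputable def gK (g : G) : Additive (Abelianization (↥K ⧸ (H ⊓ K).subgroupOf K)) :=
  Additive.ofMul (Abelianization.of (QuotientGroup.mk (⟨c.kp g, c.memK g⟩ : ↥K)))

theorem gH_mul (x y : G) : c.gH (x * y) = c.gH x + c.gH y := by
  have h1 : (QuotientGroup.mk (⟨c.hp (x * y), c.memH _⟩ : ↥H) :
      ↥H ⧸ (H ⊓ K).subgroupOf H) =
      QuotientGroup.mk (⟨c.hp x, c.memH x⟩ * ⟨c.hp y, c.memH y⟩ : ↥H) := by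
    rw [QuotientGroup.eq, Subgroup.mem_subgroupOf]
    exact c.c1_mem x y
  unfold gH
  rw [h1, QuotientGroup.mk_mul, map_mul, ofMul_mul]

theorem gK_mul (x y : G) : c.gK (x * y) = c.gK x + c.gK y := by
  have h1 : (QuotientGroup.mk (⟨c.kp (x * y), c.memK _⟩ : ↥K) :
      ↥K ⧸ (H ⊓ K).subgroupOf K) =
      QuotientGroup.mk (⟨c.kp x, c.memK x⟩ * ⟨c.kp y, c.memK y⟩ : ↥K) := by
    rw [QuotientGroup.eq, Subgroup.mem_subgroupOf]
    exact c.k1_mem x y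
  unfold gK
  rw [h1, QuotientGroup.mk_mul, map_mul, ofMul_mul]

theorem gH_eq_of_memH {x : G} (hx : x ∈ H) :
    c.gH x = Additive.ofMul (Abelianization.of (QuotientGroup.mk (⟨x, hx⟩ : ↥H))) := by
  have h1 : (QuotientGroup.mk (⟨c.hp x, c.memH x⟩ : ↥H) : ↥H ⧸ (H ⊓ K).subgroupOf H) =
      QuotientGroup.mk (⟨x, hx⟩ : ↥H) := by
    rw [QuotientGroup.eq, Subgroup.mem_subgroupOf]
    show (c.hp x)⁻¹ * x ∈ H ⊓ K
    have h2 : (c.hp x)⁻¹ * x = c.kp x := (c.kp_eq x).symm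
    rw [h2]
    exact c.kp_mem_of_memH hx
  unfold gH
  rw [h1]

theorem gK_eq_of_memK {y : G} (hy : y ∈ K) :
    c.gK y = Additive.ofMul (Abelianization.of (QuotientGroup.mk (⟨y, hy⟩ : ↥K))) := by
  have h1 : (QuotientGroup.mk (⟨c.kp y, c.memK y⟩ : ↥K) : ↥K ⧸ (H ⊓ K).subgroupOf K) =
      QuotientGroup.mk (⟨y, hy⟩ : ↥K) := by
    rw [QuotientGroup.eq, Subgroup.mem_subgroupOf]
    show (c.kp y)⁻¹ * y ∈ H ⊓ K
    have h2 : ((c.kp y)⁻¹ * y)⁻¹ = y⁻¹ * c.kp y := by group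
    rw [← inv_mem_iff, h2]
    exact c.inv_mul_kp_mem hy
  unfold gK
  rw [h1]

theorem gH_eq_zero_of_memK {y : G} (hy : y ∈ K) : c.gH y = 0 := by
  have h1 : (QuotientGroup.mk (⟨c.hp y, c.memH y⟩ : ↥H) : ↥H ⧸ (H ⊓ K).subgroupOf H) = 1 := by
    rw [QuotientGroup.eq_one_iff, Subgroup.mem_subgroupOf]
    exact c.hp_mem_of_memK hy
  unfold gH
  rw [h1, map_one]
  rfl

theorem gK_eq_zero_of_memH {x : G} (hx : x ∈ H) : c.gK x = 0 := by
  have h1 : (QuotientGroup.mk (⟨c.kp x, c.memK x⟩ : ↥K) : ↥K ⧸ (H ⊓ K).subgroupOf K) = 1 := by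
    rw [QuotientGroup.eq_one_iff, Subgroup.mem_subgroupOf]
    exact c.kp_mem_of_memH hx
  unfold gK
  rw [h1, map_one]
  rfl

variable (D : Type) [AddCommGroup D]

/-- The 2-cocycle on `G` attached to a character `χ` of `A = H ⊓ K` and a linear
functional `ℓ` on the tensor product `(H/A) ⊗ (K/A)`. -/
noncomputable def Wfun (χ : Additive ↥(H ⊓ K) →+ D)
    (ℓ : AbTensor (↥H ⧸ (H ⊓ K).subgroupOf H) (↥K ⧸ (H ⊓ K).subgroupOf K) →ₗ[ℤ] D) :
    G → G → D :=
  fun x y => χ (Additive.ofMul (c.tA x y)) + ℓ (c.gH x ⊗ₜ[ℤ] c.gK y)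

theorem Wfun_mem_cocycles2 (χ : Additive ↥(H ⊓ K) →+ D)
    (ℓ : AbTensor (↥H ⧸ (H ⊓ K).subgroupOf H) (↥K ⧸ (H ⊓ K).subgroupOf K) →ₗ[ℤ] D) :
    c.Wfun D χ ℓ ∈ cocycles2 G D := by
  intro x y z
  show (χ (Additive.ofMul (c.tA x y)) + ℓ (c.gH x ⊗ₜ[ℤ] c.gK y)) +
      (χ (Additive.ofMul (c.tA (x * y) z)) + ℓ (c.gH (x * y) ⊗ₜ[ℤ] c.gK z)) =
      (χ (Additive.ofMul (c.tA y z)) + ℓ (c.gH y ⊗ₜ[ℤ] c.gK z)) +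
      (χ (Additive.ofMul (c.tA x (y * z))) + ℓ (c.gH x ⊗ₜ[ℤ] c.gK (y * z)))
  have hχ : χ (Additive.ofMul (c.tA x y)) + χ (Additive.ofMul (c.tA (x * y) z)) =
      χ (Additive.ofMul (c.tA y z)) + χ (Additive.ofMul (c.tA x (y * z))) := by
    have e : ∀ a b : ↥(H ⊓ K), χ (Additive.ofMul a) + χ (Additive.ofMul b) =
        χ (Additive.ofMul (a * b)) := fun a b => by rw [ofMul_mul, map_add]
    rw [e, e, c.tA_cocycle]
  have hℓ : ℓ (c.gH x ⊗ₜ[ℤ] c.gK y) + ℓ (c.gH (x * y) ⊗ₜ[ℤ] c.gK z) =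
      ℓ (c.gH y ⊗ₜ[ℤ] c.gK z) + ℓ (c.gH x ⊗ₜ[ℤ] c.gK (y * z)) := by
    rw [c.gH_mul x y, c.gK_mul y z, TensorProduct.add_tmul, TensorProduct.tmul_add,
      map_add, map_add]
    abel
  rw [add_add_add_comm, hχ, hℓ, add_add_add_comm]

/-- The homomorphism from characters of `A` and functionals on the tensor product
to `H²(G, D)`. -/
noncomputable def Wmap :
    ((Additive ↥(H ⊓ K) →+ D) ×
      (AbTensor (↥H ⧸ (H ⊓ K).subgroupOf H) (↥K ⧸ (H ⊓ K).subgroupOf K) →ₗ[ℤ] D)) →+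
      H2 G D :=
  AddMonoidHom.mk'
    (fun p => H2mk ⟨c.Wfun D p.1 p.2, c.Wfun_mem_cocycles2 D p.1 p.2⟩)
    (by
      intro p q
      show H2mk _ = H2mk (_ + _)
      congr 1
      apply Subtype.ext
      funext x y
      show c.Wfun D (p.1 + q.1) (p.2 + q.2) x y = c.Wfun D p.1 p.2 x y + c.Wfun D q.1 q.2 x y
      unfold Wfun
      rw [AddMonoidHom.add_apply, LinearMap.add_apply]
      abel)

end QuotClasses

end CPData

theorem map_subtype_commutator {G : Type} [Group G] (H : Subgroup G) :
    Subgroup.map H.subtype (_root_.commutator ↥H) = ⁅H, H⁆ := by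
  rw [_root_.commutator_def, Subgroup.map_commutator, ← MonoidHom.range_eq_map,
    Subgroup.range_subtype]

theorem ab_class_surj {Q : Type} [Group Q] (b : Additive (Abelianization Q)) :
    ∃ q : Q, b = Additive.ofMul (Abelianization.of q) := by
  have hm : ∀ m : Abelianization Q, ∃ q : Q, m = Abelianization.of q := by
    intro m
    induction m using QuotientGroup.induction_on with
    | _ z => exact ⟨z, rfl⟩
  obtain ⟨q, hq⟩ := hm (Additive.toMul b)
  exact ⟨q, by rw [← hq, ofMul_toMul]⟩

namespace CPData

section KeyLemmas

variable {G : Type} [Group G] {H K : Subgroup G} (c : CPData G H K)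
variable [((H ⊓ K).subgroupOf H).Normal] [((H ⊓ K).subgroupOf K).Normal]
variable (D : Type) [AddCommGroup D]

/-- If the cocycle attached to `(χ, ℓ)` is a coboundary, then `χ` vanishes on
`Z = [H,H] ⊓ [K,K]` and `ℓ = 0`. -/
theorem ker_characterization (χ : Additive ↥(H ⊓ K) →+ D)
    (ℓ : AbTensor (↥H ⧸ (H ⊓ K).subgroupOf H) (↥K ⧸ (H ⊓ K).subgroupOf K) →ₗ[ℤ] D)
    (h : c.Wfun D χ ℓ ∈ coboundaries2 G D) :
    (∀ z (hz : z ∈ ⁅H, H⁆ ⊓ ⁅K, K⁆),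
      χ (Additive.ofMul (⟨z, inf_commutator_le_inf H K hz⟩ : ↥(H ⊓ K))) = 0) ∧ ℓ = 0 := by
  obtain ⟨φ, hφ⟩ := h
  -- Step 1: `ℓ = 0`, via the commutator pairing on `H × K`.
  have step1 : ∀ (x : ↥H) (y : ↥K), ℓ (c.gH ↑x ⊗ₜ[ℤ] c.gK ↑y) = 0 := by
    intro x y
    have hc : (↑x : G) * ↑y = ↑y * ↑x := (c.comm ↑x x.2 ↑y y.2).eq
    have e1 : c.Wfun D χ ℓ ↑x ↑y = c.Wfun D χ ℓ ↑y ↑x := by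
      rw [hφ, hφ, hc]
      abel
    have e2 : χ (Additive.ofMul (c.tA (↑x) ↑y)) = χ (Additive.ofMul (c.tA (↑y) ↑x)) := by
      rw [c.tA_comm x.2 y.2]
    unfold Wfun at e1
    rw [e2] at e1
    have e3 := add_left_cancel e1
    rw [c.gH_eq_zero_of_memK y.2, TensorProduct.zero_tmul, map_zero] at e3
    exact e3
  have hℓ : ℓ = 0 := by
    apply LinearMap.ext
    intro v
    rw [LinearMap.zero_apply]
    induction v using TensorProduct.induction_on with
    | zero => exact map_zero ℓ
    | tmul a b =>
        obtain ⟨qh, rfl⟩ := ab_class_surj a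
        obtain ⟨qk, rfl⟩ := ab_class_surj b
        induction qh using QuotientGroup.induction_on with
        | _ xh =>
          induction qk using QuotientGroup.induction_on with
          | _ yk =>
            have e4 := step1 xh yk
            rw [c.gH_eq_of_memH xh.2, c.gK_eq_of_memK yk.2] at e4
            exact e4
    | add u v hu hv => rw [map_add, hu, hv, add_zero]
  refine ⟨?_, hℓ⟩
  -- Step 2: `χ` vanishes on `Z`, via homomorphisms built from `φ` on `H` and on `K`.
  have addH : ∀ x y : ↥H,
      φ (↑(x * y)) + χ (Additive.ofMul (c.kpA ↑(x * y) (x * y).2)) =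
      (φ ↑x + χ (Additive.ofMul (c.kpA ↑x x.2))) +
      (φ ↑y + χ (Additive.ofMul (c.kpA ↑y y.2))) := by
    intro x y
    have h1 : c.Wfun D χ ℓ ↑x ↑y = φ ↑x + φ ↑y - φ (↑x * ↑y) := hφ ↑x ↑y
    have h4 : c.Wfun D χ ℓ ↑x ↑y = χ (Additive.ofMul (c.tA ↑x ↑y)) := by
      show χ _ + ℓ _ = _
      rw [c.gK_eq_zero_of_memH y.2, TensorProduct.tmul_zero, map_zero, add_zero]
    have h2 : χ (Additive.ofMul (c.tA ↑x ↑y)) =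
        χ (Additive.ofMul (c.kpA (↑x * ↑y) (H.mul_mem x.2 y.2))) -
        χ (Additive.ofMul (c.kpA ↑y y.2)) - χ (Additive.ofMul (c.kpA ↑x x.2)) := by
      rw [c.tA_kp x.2 y.2, ofMul_mul, ofMul_mul, ofMul_inv, ofMul_inv, map_add, map_add,
        map_neg, map_neg]
      abel
    have h3 : φ (↑x * ↑y) = φ ↑x + φ ↑y - c.Wfun D χ ℓ ↑x ↑y := by
      rw [h1]
      abel
    show φ (↑x * ↑y) + χ (Additive.ofMul (c.kpA (↑x * ↑y) (H.mul_mem x.2 y.2))) = _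
    rw [h3, h4, h2]
    abel
  have addK : ∀ x y : ↥K,
      φ (↑(x * y)) - χ (Additive.ofMul (c.hpA ↑(x * y) (x * y).2)) =
      (φ ↑x - χ (Additive.ofMul (c.hpA ↑x x.2))) +
      (φ ↑y - χ (Additive.ofMul (c.hpA ↑y y.2))) := by
    intro x y
    have h1 : c.Wfun D χ ℓ ↑x ↑y = φ ↑x + φ ↑y - φ (↑x * ↑y) := hφ ↑x ↑y
    have h4 : c.Wfun D χ ℓ ↑x ↑y = χ (Additive.ofMul (c.tA ↑x ↑y)) := by
      show χ _ + ℓ _ = _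
      rw [c.gH_eq_zero_of_memK x.2, TensorProduct.zero_tmul, map_zero, add_zero]
    have h2 : χ (Additive.ofMul (c.tA ↑x ↑y)) =
        χ (Additive.ofMul (c.hpA ↑x x.2)) + χ (Additive.ofMul (c.hpA ↑y y.2)) -
        χ (Additive.ofMul (c.hpA (↑x * ↑y) (K.mul_mem x.2 y.2))) := by
      rw [c.tA_hp x.2 y.2, ofMul_mul, ofMul_mul, ofMul_inv, map_add, map_add, map_neg]
      abel
    have h3 : φ (↑x * ↑y) = φ ↑x + φ ↑y - c.Wfun D χ ℓ ↑x ↑y := by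
      rw [h1]
      abel
    show φ (↑x * ↑y) - χ (Additive.ofMul (c.hpA (↑x * ↑y) (K.mul_mem x.2 y.2))) = _
    rw [h3, h4, h2]
    abel
  -- bundle them as homomorphisms into `Multiplicative D`
  let uH : ↥H →* Multiplicative D := MonoidHom.mk'
    (fun x => Multiplicative.ofAdd (φ ↑x + χ (Additive.ofMul (c.kpA ↑x x.2))))
    (fun x y => by rw [← ofAdd_add, addH x y])
  let uK : ↥K →* Multiplicative D := MonoidHom.mk'
    (fun x => Multiplicative.ofAdd (φ ↑x - χ (Additive.ofMul (c.hpA ↑x x.2))))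
    (fun x y => by rw [← ofAdd_add, addK x y])
  intro z hz
  have hzA := inf_commutator_le_inf H K hz
  -- H side
  obtain ⟨w, hw, hwz⟩ := Subgroup.mem_map.mp ((map_subtype_commutator H) ▸ hz.1)
  have h5 : uH w = 1 := Abelianization.commutator_subset_ker uH hw
  have h5' : φ ↑w + χ (Additive.ofMul (c.kpA ↑w w.2)) = 0 := by
    have := congrArg Multiplicative.toAdd h5
    exact this
  have hwz' : (↑w : G) = z := hwz
  -- K side
  obtain ⟨w2, hw2, hwz2⟩ := Subgroup.mem_map.mp ((map_subtype_commutator K) ▸ hz.2)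
  have h6 : uK w2 = 1 := Abelianization.commutator_subset_ker uK hw2
  have h6' : φ ↑w2 - χ (Additive.ofMul (c.hpA ↑w2 w2.2)) = 0 := by
    have := congrArg Multiplicative.toAdd h6
    exact this
  have hwz2' : (↑w2 : G) = z := hwz2
  -- combine
  have ekp : c.kpA (↑w) w.2 = c.kpA z hzA.1 := Subtype.ext (congrArg c.kp hwz')
  have ehp : c.hpA (↑w2) w2.2 = c.hpA z hzA.2 := Subtype.ext (congrArg c.hp hwz2')
  show χ (Additive.ofMul (⟨z, hzA⟩ : ↥(H ⊓ K))) = 0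
  have h7 : χ (Additive.ofMul (c.hpA z hzA.2)) + χ (Additive.ofMul (c.kpA z hzA.1)) =
      χ (Additive.ofMul (⟨z, hzA⟩ : ↥(H ⊓ K))) := by
    rw [← map_add, ← ofMul_mul, c.hpA_mul_kpA hzA]
  rw [← h7]
  have h8 : χ (Additive.ofMul (c.kpA z hzA.1)) = - φ z := by
    rw [← ekp, ← hwz']
    exact eq_neg_of_add_eq_zero_right h5'
  have h9 : χ (Additive.ofMul (c.hpA z hzA.2)) = φ z := by
    rw [← ehp, ← hwz2']
    exact (sub_eq_zero.mp h6').symm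
  rw [h8, h9, add_neg_cancel]

end KeyLemmas

end CPData

namespace CPData

section Vanish

variable {G : Type} [Group G] {H K : Subgroup G} (c : CPData G H K)
variable [((H ⊓ K).subgroupOf H).Normal] [((H ⊓ K).subgroupOf K).Normal]
variable (D : Type) [AddCommGroup D]

/-- If `χ` vanishes on `Z = [H,H] ⊓ [K,K]` (and `D` allows extensions of homomorphisms
along injections), then the cocycle attached to `(χ, 0)` is a coboundary. -/
theorem Wfun_vanish (χ : Additive ↥(H ⊓ K) →+ D)
    (hD : ∀ (X Y : Type) [AddCommGroup X] [AddCommGroup Y] (i : X →+ Y),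
      Function.Injective i → ∀ f : X →+ D, ∃ g : Y →+ D, ∀ x, g (i x) = f x)
    (hχ : ∀ z (hz : z ∈ ⁅H, H⁆ ⊓ ⁅K, K⁆),
      χ (Additive.ofMul (⟨z, inf_commutator_le_inf H K hz⟩ : ↥(H ⊓ K))) = 0) :
    c.Wfun D χ
      (0 : AbTensor (↥H ⧸ (H ⊓ K).subgroupOf H) (↥K ⧸ (H ⊓ K).subgroupOf K) →ₗ[ℤ] D) ∈
      coboundaries2 G D := by
  classical
  -- the "difference" homomorphism into `Hᵃᵇ × Kᵃᵇ`
  let δ : Additive ↥(H ⊓ K) →+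
      (Additive (Abelianization ↥H) × Additive (Abelianization ↥K)) :=
    AddMonoidHom.mk'
      (fun a =>
        (Additive.ofMul (Abelianization.of (Subgroup.inclusion inf_le_left (Additive.toMul a))),
         - Additive.ofMul (Abelianization.of (Subgroup.inclusion inf_le_right (Additive.toMul a)))))
      (fun a b => by
        have h1 : Additive.toMul (a + b) = Additive.toMul a * Additive.toMul b := rfl
        rw [Prod.mk_add_mk, Prod.mk.injEq]
        constructor
        · rw [h1, map_mul, map_mul, ofMul_mul]
        · rw [h1, map_mul, map_mul, ofMul_mul, neg_add])
  have hkerδ : ∀ a : Additive ↥(H ⊓ K), δ a = 0 →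
      ((Additive.toMul a : ↥(H ⊓ K)) : G) ∈ ⁅H, H⁆ ⊓ ⁅K, K⁆ := by
    intro a ha
    have h1 : Additive.ofMul
        (Abelianization.of (Subgroup.inclusion inf_le_left (Additive.toMul a))) = 0 :=
      congrArg Prod.fst ha
    have h2 : - Additive.ofMul
        (Abelianization.of (Subgroup.inclusion inf_le_right (Additive.toMul a))) = 0 :=
      congrArg Prod.snd ha
    constructor
    · have h3 : Abelianization.of (Subgroup.inclusion inf_le_left (Additive.toMul a)) = 1 := by
        have := congrArg Additive.toMul h1
        simpa using this
      have h4 : Subgroup.inclusion inf_le_left (Additive.toMul a) ∈ _root_.commutator ↥H :=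
        (QuotientGroup.eq_one_iff _).mp h3
      have h5 : ((Additive.toMul a : ↥(H ⊓ K)) : G) ∈
          Subgroup.map H.subtype (_root_.commutator ↥H) := ⟨_, h4, rfl⟩
      rwa [map_subtype_commutator] at h5
    · have h3 : Abelianization.of (Subgroup.inclusion inf_le_right (Additive.toMul a)) = 1 := by
        have := congrArg Additive.toMul (neg_eq_zero.mp h2)
        simpa using this
      have h4 : Subgroup.inclusion inf_le_right (Additive.toMul a) ∈ _root_.commutator ↥K :=
        (QuotientGroup.eq_one_iff _).mp h3
      have h5 : ((Additive.toMul a : ↥(H ⊓ K)) : G) ∈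
          Subgroup.map K.subtype (_root_.commutator ↥K) := ⟨_, h4, rfl⟩
      rwa [map_subtype_commutator] at h5
  have hker_le : δ.ker ≤ χ.ker := by
    intro a ha
    rw [AddMonoidHom.mem_ker] at ha ⊢
    have hz := hkerδ a ha
    have h6 := hχ _ hz
    exact h6
  let χq := QuotientAddGroup.lift δ.ker χ hker_le
  let e := QuotientAddGroup.quotientKerEquivRange δ
  obtain ⟨ρ, hρ⟩ := hD _ _ δ.range.subtype δ.range.subtype_injective
    (χq.comp e.symm.toAddMonoidHom)
  have key : ∀ a : Additive ↥(H ⊓ K), ρ (δ a) = χ a := by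
    intro a
    have m : δ a ∈ δ.range := ⟨a, rfl⟩
    have h1 : δ.range.subtype ⟨δ a, m⟩ = δ a := rfl
    rw [← h1, hρ]
    have h2 : e (QuotientAddGroup.mk a) = ⟨δ a, m⟩ := by
      apply Subtype.ext
      rfl
    have h3 : e.symm ⟨δ a, m⟩ = QuotientAddGroup.mk a := by
      rw [← h2, AddEquiv.symm_apply_apply]
    show χq (e.symm ⟨δ a, m⟩) = χ a
    rw [h3]
    rfl
  refine ⟨fun g => ρ (Additive.ofMul (Abelianization.of (⟨c.hp g, c.memH g⟩ : ↥H)),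
                      Additive.ofMul (Abelianization.of (⟨c.kp g, c.memK g⟩ : ↥K))), ?_⟩
  intro x y
  have hW : c.Wfun D χ 0 x y = χ (Additive.ofMul (c.tA x y)) := by
    show χ _ + (0 : _ →ₗ[ℤ] D) _ = _
    rw [LinearMap.zero_apply, add_zero]
  rw [hW, ← key (Additive.ofMul (c.tA x y)), ← map_add ρ, ← map_sub ρ]
  congr 1
  have comp1 : Additive.ofMul (Abelianization.of
        (Subgroup.inclusion inf_le_left (Additive.toMul (Additive.ofMul (c.tA x y))))) =
      (Additive.ofMul (Abelianization.of (⟨c.hp x, c.memH x⟩ : ↥H)) +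
       Additive.ofMul (Abelianization.of (⟨c.hp y, c.memH y⟩ : ↥H))) -
      Additive.ofMul (Abelianization.of (⟨c.hp (x * y), c.memH (x * y)⟩ : ↥H)) := by
    rw [sub_eq_add_neg, ← ofMul_inv, ← map_inv, ← ofMul_mul, ← map_mul, ← ofMul_mul, ← map_mul]
    exact congrArg _ (congrArg _ (Subtype.ext rfl))
  have hsub : (Additive.ofMul (Abelianization.of (⟨c.kp x, c.memK x⟩ : ↥K)) +
       Additive.ofMul (Abelianization.of (⟨c.kp y, c.memK y⟩ : ↥K))) -
      Additive.ofMul (Abelianization.of (⟨c.kp (x * y), c.memK (x * y)⟩ : ↥K)) =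
      Additive.ofMul (Abelianization.of ((⟨c.kp x, c.memK x⟩ : ↥K) * ⟨c.kp y, c.memK y⟩ *
        (⟨c.kp (x * y), c.memK (x * y)⟩ : ↥K)⁻¹)) := by
    rw [sub_eq_add_neg, ← ofMul_inv, ← map_inv, ← ofMul_mul, ← map_mul, ← ofMul_mul, ← map_mul]
  have comp2 : - Additive.ofMul (Abelianization.of
        (Subgroup.inclusion inf_le_right (Additive.toMul (Additive.ofMul (c.tA x y))))) =
      (Additive.ofMul (Abelianization.of (⟨c.kp x, c.memK x⟩ : ↥K)) +
       Additive.ofMul (Abelianization.of (⟨c.kp y, c.memK y⟩ : ↥K))) -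
      Additive.ofMul (Abelianization.of (⟨c.kp (x * y), c.memK (x * y)⟩ : ↥K)) := by
    rw [hsub]
    rw [show ((⟨c.kp x, c.memK x⟩ : ↥K) * ⟨c.kp y, c.memK y⟩ *
        (⟨c.kp (x * y), c.memK (x * y)⟩ : ↥K)⁻¹) =
        (Subgroup.inclusion inf_le_right (Additive.toMul (Additive.ofMul (c.tA x y))))⁻¹ from
      Subtype.ext (by
        show c.kp x * c.kp y * (c.kp (x * y))⁻¹ = (c.t x y)⁻¹
        exact c.t_kp x y)]
    rw [map_inv, ofMul_inv]
  show (_, _) = _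
  rw [Prod.mk_add_mk, Prod.mk_sub_mk, comp1, comp2]

end Vanish

end CPData

/-- **Wiegold-type embedding.** For a finite central product `G = HK`, the Schur
multiplier `M(G) = H²(G, ℂ*)` contains a subgroup isomorphic to
`Z × (H/A ⊗ K/A)`. -/
theorem schurMultiplier_contains {G : Type} [Group G] [Finite G] (H K : Subgroup G)
    [H.Normal] [K.Normal]
    (hprod : H ⊔ K = ⊤) (hcomm : ∀ h ∈ H, ∀ k ∈ K, Commute h k)
    [((H ⊓ K).subgroupOf H).Normal] [((H ⊓ K).subgroupOf K).Normal] :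
    ∃ ι : (Additive ↥(⁅H, H⁆ ⊓ ⁅K, K⁆) ×
        AbTensor (↥H ⧸ (H ⊓ K).subgroupOf H) (↥K ⧸ (H ⊓ K).subgroupOf K)) →+
      H2 G (Additive ℂˣ),
      Function.Injective ι := by
  classical
  -- decompose each element of `G` as a product of an element of `H` and of `K`
  have hdecomp : ∀ g : G, ∃ q : G × G, q.1 ∈ H ∧ q.2 ∈ K ∧ q.1 * q.2 = g := by
    intro g
    have hg : g ∈ (↑(H ⊔ K) : Set G) := by rw [hprod]; trivial
    rw [Subgroup.mul_normal] at hg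
    obtain ⟨h1, hh1, k1, hk1, e1⟩ := hg
    exact ⟨(h1, k1), hh1, hk1, e1⟩
  choose q hq1 hq2 hq3 using hdecomp
  have hcentral : ∀ a ∈ H ⊓ K, ∀ g : G, Commute a g := by
    intro a ha g
    have hle : (⊤ : Subgroup G) ≤ Subgroup.centralizer {a} := by
      rw [← hprod]
      apply sup_le
      · intro h hh
        rw [Subgroup.mem_centralizer_iff]
        intro b hb
        rw [Set.mem_singleton_iff] at hb
        rw [hb]
        exact ((hcomm h hh a ha.2).symm).eq
      · intro k hk
        rw [Subgroup.mem_centralizer_iff]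
        intro b hb
        rw [Set.mem_singleton_iff] at hb
        rw [hb]
        exact (hcomm a ha.1 k hk).eq
    have hmem := hle (Subgroup.mem_top g)
    rw [Subgroup.mem_centralizer_iff] at hmem
    exact hmem a rfl
  let c : CPData G H K :=
    ⟨fun g => (q g).1, fun g => (q g).2, hq1, hq2, hq3, hcomm, hcentral⟩
  have hZle : ⁅H, H⁆ ⊓ ⁅K, K⁆ ≤ H ⊓ K := inf_commutator_le_inf H K
  letI : CommGroup ↥(⁅H, H⁆ ⊓ ⁅K, K⁆) :=
    { (inferInstance : Group ↥(⁅H, H⁆ ⊓ ⁅K, K⁆)) with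
      mul_comm := fun a b => Subtype.ext ((hcentral ↑a (hZle a.2) ↑b).eq) }
  letI : CommGroup ↥(H ⊓ K) :=
    { (inferInstance : Group ↥(H ⊓ K)) with
      mul_comm := fun a b => Subtype.ext ((hcentral ↑a a.2 ↑b).eq) }
  let D := Additive ℂˣ
  have hDext : ∀ (X Y : Type) [AddCommGroup X] [AddCommGroup Y] (i : X →+ Y),
      Function.Injective i → ∀ f : X →+ D, ∃ g : Y →+ D, ∀ x, g (i x) = f x := by
    intro X Y _ _ i hi f
    exact extend_to_units i hi f
  let T := AbTensor (↥H ⧸ (H ⊓ K).subgroupOf H) (↥K ⧸ (H ⊓ K).subgroupOf K)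
  let W := c.Wmap D
  let inclZA : Additive ↥(⁅H, H⁆ ⊓ ⁅K, K⁆) →+ Additive ↥(H ⊓ K) :=
    MonoidHom.toAdditive (Subgroup.inclusion hZle)
  have hinj : Function.Injective inclZA := by
    intro a b hab
    have h2 : Subgroup.inclusion hZle (Additive.toMul a) =
        Subgroup.inclusion hZle (Additive.toMul b) := hab
    have h3 := Subgroup.inclusion_injective hZle h2
    exact h3
  let rHom : (Additive ↥(H ⊓ K) →+ D) →+ (Additive ↥(⁅H, H⁆ ⊓ ⁅K, K⁆) →+ D) :=
    AddMonoidHom.mk' (fun χ => χ.comp inclZA) (fun χ₁ χ₂ => by ext a; rfl)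
  let r := rHom.prodMap (AddMonoidHom.id (T →ₗ[ℤ] D))
  have hrsurj : Function.Surjective r := by
    rintro ⟨ξ, ℓ⟩
    obtain ⟨χ, hχ⟩ := hDext _ _ inclZA hinj ξ
    exact ⟨(χ, ℓ), Prod.ext (AddMonoidHom.ext hχ) rfl⟩
  have hWr : ∀ v, W v = 0 ↔ r v = 0 := by
    rintro ⟨χ, ℓ⟩
    constructor
    · intro h0
      have hmem : c.Wfun D χ ℓ ∈ coboundaries2 G D := by
        have h1 : (QuotientAddGroup.mk
            (⟨c.Wfun D χ ℓ, c.Wfun_mem_cocycles2 D χ ℓ⟩ : cocycles2 G D) : H2 G D) = 0 := h0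
        rw [QuotientAddGroup.eq_zero_iff] at h1
        rwa [AddSubgroup.mem_addSubgroupOf] at h1
      obtain ⟨hχZ, hℓ⟩ := c.ker_characterization D χ ℓ hmem
      refine Prod.ext ?_ ?_
      · show χ.comp inclZA = 0
        refine AddMonoidHom.ext fun a => ?_
        show χ (inclZA a) = 0
        exact hχZ _ (Additive.toMul a).2
      · exact hℓ
    · intro h0
      have h1 : χ.comp inclZA = 0 := congrArg Prod.fst h0
      have h2 : ℓ = 0 := congrArg Prod.snd h0
      have hχZ : ∀ z (hz : z ∈ ⁅H, H⁆ ⊓ ⁅K, K⁆),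
          χ (Additive.ofMul (⟨z, inf_commutator_le_inf H K hz⟩ : ↥(H ⊓ K))) = 0 := by
        intro z hz
        have h4 := DFunLike.congr_fun h1
          (Additive.ofMul (⟨z, hz⟩ : ↥(⁅H, H⁆ ⊓ ⁅K, K⁆)))
        exact h4
      show W (χ, ℓ) = 0
      rw [show (χ, ℓ) = ((χ, 0) : _) from by rw [h2]]
      show (QuotientAddGroup.mk _ : H2 G D) = 0
      rw [QuotientAddGroup.eq_zero_iff, AddSubgroup.mem_addSubgroupOf]
      exact c.Wfun_vanish D χ hDext hχZ
  let E := QuotientAddGroup.quotientKerEquivOfSurjective (G := (Additive ↥(H ⊓ K) →+ D) × (T →ₗ[ℤ] D)) (H := (Additive ↥(⁅H, H⁆ ⊓ ⁅K, K⁆) →+ D) × (T →ₗ[ℤ] D)) r hrsurj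
  have hkerW : r.ker ≤ W.ker := by
    intro v hv
    rw [AddMonoidHom.mem_ker] at hv ⊢
    exact (hWr v).mpr hv
  let L := QuotientAddGroup.lift r.ker W hkerW
  have hLinj : Function.Injective L := by
    rw [injective_iff_map_eq_zero]
    intro v hv
    induction v using QuotientAddGroup.induction_on with
    | _ z =>
      have h5 : W z = 0 := hv
      rw [QuotientAddGroup.eq_zero_iff]
      exact AddMonoidHom.mem_ker.mpr ((hWr z).mp h5)
  obtain ⟨eZ⟩ := dual_equiv ↥(⁅H, H⁆ ⊓ ⁅K, K⁆)
  haveI : Finite (↥H ⧸ (H ⊓ K).subgroupOf H) := Quotient.finite _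
  haveI : Finite (↥K ⧸ (H ⊓ K).subgroupOf K) := Quotient.finite _
  haveI : Finite T := finite_abTensor _ _
  obtain ⟨eT0⟩ := dual_equiv_add T
  let eT : T ≃+ (T →ₗ[ℤ] D) := eT0.trans (addMonoidHomLequivInt ℤ).toAddEquiv
  let eP := AddEquiv.prodCongr (M := Additive ↥(⁅H, H⁆ ⊓ ⁅K, K⁆)) (M' := Additive ↥(⁅H, H⁆ ⊓ ⁅K, K⁆) →+ D) (N := T) (N' := T →ₗ[ℤ] D) eZ eT
  let ι := (L.comp E.symm.toAddMonoidHom).comp eP.toAddMonoidHom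
  exact ⟨ι, (hLinj.comp E.symm.injective).comp eP.injective⟩

end SchurCP
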